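/- Suppose every graph without isolated vertices satisfies the weighted Scott lemma: every k-chromatic graph G without isolated vertices contains, for each 2 ≤ m ≤ k, an induced m-chromatic subgraph H without isolated vertices with |V(H)| ≥ (m/k)|V(G)|. Then every claw-free graph G without isolated vertices satisfies f_o(G) ≥ |V(G)|/χ(G). -/

import Mathlib

open Classical in
/-- Degree of `v` within the subgraph of `G` induced by the finite vertex set `s`. -/
noncomputable def indDeg {V : Type*} (G : SimpleGraph V) (s : Finset V) (v : V) : ℕ :=
  (s.filter (fun w => G.Adj v w)).card

/-- `s` induces a subgraph of `G` in which every vertex has odd degree. -/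
def IsOddSet {V : Type*} (G : SimpleGraph V) (s : Finset V) : Prop :=
  ∀ v ∈ s, Odd (indDeg G s v)

/-- `f_o(G)`: maximum order of an induced subgraph with all degrees odd. -/
noncomputable def fo {V : Type*} (G : SimpleGraph V) : ℕ :=
  sSup {n | ∃ s : Finset V, IsOddSet G s ∧ s.card = n}

open Classical

lemma clawfree' {V : Type} (G : SimpleGraph V)
    (hclaw : IsEmpty (completeBipartiteGraph (Fin 1) (Fin 3) ↪g G)) :
    ∀ v a b c : V, a ≠ b → a ≠ c → b ≠ c → G.Adj v a → G.Adj v b → G.Adj v c →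
      ¬G.Adj a b → ¬G.Adj a c → ¬G.Adj b c → False := by
  intro v a b c hab hac hbc hva hvb hvc nab nac nbc
  have nba : ¬G.Adj b a := fun h => nab h.symm
  have nca : ¬G.Adj c a := fun h => nac h.symm
  have ncb : ¬G.Adj c b := fun h => nbc h.symm
  apply hclaw.false
  refine ⟨⟨Sum.elim (fun _ => v) ![a, b, c], ?_⟩, ?_⟩
  · intro x y h
    match x, y with
    | Sum.inl i, Sum.inl j => simp [Subsingleton.elim i j]
    | Sum.inl i, Sum.inr j =>
      exfalso; fin_cases j <;> simp at h
      · exact hva.ne h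
      · exact hvb.ne h
      · exact hvc.ne h
    | Sum.inr i, Sum.inl j =>
      exfalso; fin_cases i <;> simp at h
      · exact hva.ne h.symm
      · exact hvb.ne h.symm
      · exact hvc.ne h.symm
    | Sum.inr i, Sum.inr j =>
      fin_cases i <;> fin_cases j <;> simp_all
  · intro x y
    match x, y with
    | Sum.inl i, Sum.inl j => simp [Subsingleton.elim i j]
    | Sum.inl i, Sum.inr j => fin_cases j <;> simp [DFunLike.coe, hva, hvb, hvc]
    | Sum.inr i, Sum.inl j => fin_cases i <;> simp [DFunLike.coe, hva.symm, hvb.symm, hvc.symm]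
    | Sum.inr i, Sum.inr j =>
      fin_cases i <;> fin_cases j <;>
        simp [DFunLike.coe, nab, nac, nbc, nba, nca, ncb]


lemma fin2_eq {x y z : Fin 2} (h1 : x ≠ z) (h2 : y ≠ z) : x = y := by omega

lemma degle {V : Type} (G : SimpleGraph V) (c : V → Fin 2) (s : Finset V)
    (hc : ∀ u v, u ∈ s → v ∈ s → G.Adj u v → c u ≠ c v)
    (hcf : ∀ v a b c : V, a ≠ b → a ≠ c → b ≠ c → G.Adj v a → G.Adj v b → G.Adj v c →
      ¬G.Adj a b → ¬G.Adj a c → ¬G.Adj b c → False)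
    (v : V) (hv : v ∈ s) : (s.filter (fun w => G.Adj v w)).card ≤ 2 := by
  by_contra h
  push_neg at h
  obtain ⟨a, ha, b, hb, c3, hc3, hab, hac, hbc⟩ := Finset.two_lt_card.mp h
  simp only [Finset.mem_filter] at ha hb hc3
  have hca : c a ≠ c v := hc a v ha.1 hv ha.2.symm
  have hcb : c b ≠ c v := hc b v hb.1 hv hb.2.symm
  have hcc : c c3 ≠ c v := hc c3 v hc3.1 hv hc3.2.symm
  have nab : ¬G.Adj a b := fun hadj => hc a b ha.1 hb.1 hadj (fin2_eq hca hcb)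
  have nac : ¬G.Adj a c3 := fun hadj => hc a c3 ha.1 hc3.1 hadj (fin2_eq hca hcc)
  have nbc : ¬G.Adj b c3 := fun hadj => hc b c3 hb.1 hc3.1 hadj (fin2_eq hcb hcc)
  exact hcf v a b c3 hab hac hbc ha.2 hb.2 hc3.2 nab nac nbc

lemma mainlem {V : Type} (G : SimpleGraph V) (c : V → Fin 2)
    (hcf : ∀ v a b c : V, a ≠ b → a ≠ c → b ≠ c → G.Adj v a → G.Adj v b → G.Adj v c →
      ¬G.Adj a b → ¬G.Adj a c → ¬G.Adj b c → False) :
    ∀ n (s : Finset V), s.card ≤ n →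
      (∀ u v, u ∈ s → v ∈ s → G.Adj u v → c u ≠ c v) →
      (∀ v ∈ s, ∃ w ∈ s, G.Adj v w) →
      ∃ t, t ⊆ s ∧ (∀ y ∈ t, indDeg G t y = 1) ∧ s.card ≤ 2 * t.card := by
  intro n
  induction n with
  | zero =>
    intro s hs _ _
    exact ⟨∅, by simp, by simp, by omega⟩
  | succ n ih =>
    intro s hs hc hmin
    rcases Finset.eq_empty_or_nonempty s with hse | hne
    · exact ⟨∅, by simp, by simp, by simp [hse]⟩
    have hdeg2 : ∀ v ∈ s, (s.filter (fun w => G.Adj v w)).card ≤ 2 :=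
      fun v hv => degle G c s hc hcf v hv
    have hdeg1 : ∀ v ∈ s, 1 ≤ (s.filter (fun w => G.Adj v w)).card := by
      intro v hv
      obtain ⟨w, hw, ha⟩ := hmin v hv
      exact Finset.card_pos.mpr ⟨w, Finset.mem_filter.mpr ⟨hw, ha⟩⟩
    -- the common step
    have key : ∀ u v : V, ∀ D : Finset V, u ∈ s → v ∈ s → G.Adj u v → D ⊆ s →
        u ∈ D → v ∈ D → (∀ x ∈ s, G.Adj u x → x ∈ D) → (∀ x ∈ s, G.Adj v x → x ∈ D) →
        D.card + ((s \ D).filter (fun y => ∀ z ∈ s \ D, ¬G.Adj y z)).card ≤ 4 →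
        ∃ t, t ⊆ s ∧ (∀ y ∈ t, indDeg G t y = 1) ∧ s.card ≤ 2 * t.card := by
      intro u v D hu hv huv hDs huD hvD hD1 hD2 hbound
      set I : Finset V := (s \ D).filter (fun y => ∀ z ∈ s \ D, ¬G.Adj y z) with hI
      set s₂ : Finset V := (s \ D) \ I with hs₂
      have hs₂sub : s₂ ⊆ s \ D := Finset.sdiff_subset
      have hs₂s : s₂ ⊆ s := hs₂sub.trans Finset.sdiff_subset
      have hmin₂ : ∀ y ∈ s₂, ∃ z ∈ s₂, G.Adj y z := by
        intro y hy
        have hy1 : y ∈ s \ D := hs₂sub hy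
        have hy2 : y ∉ I := (Finset.mem_sdiff.mp hy).2
        have : ¬(∀ z ∈ s \ D, ¬G.Adj y z) := by
          intro hcon
          exact hy2 (Finset.mem_filter.mpr ⟨hy1, hcon⟩)
        push_neg at this
        obtain ⟨z, hz, hyz⟩ := this
        refine ⟨z, Finset.mem_sdiff.mpr ⟨hz, ?_⟩, hyz⟩
        intro hzI
        exact (Finset.mem_filter.mp hzI).2 y hy1 hyz.symm
      have hcard₂ : s₂.card ≤ n := by
        have h1 : s₂ ⊆ s.erase u := by
          intro z hz
          have hz1 := Finset.mem_sdiff.mp (hs₂sub hz)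
          exact Finset.mem_erase.mpr ⟨fun h => hz1.2 (h ▸ huD), hz1.1⟩
        have h2 := Finset.card_le_card h1
        have h3 := Finset.card_erase_of_mem hu
        omega
      obtain ⟨t', ht's₂, ht'deg, ht'card⟩ :=
        ih s₂ hcard₂ (fun a b ha hb => hc a b (hs₂s ha) (hs₂s hb)) hmin₂
      have ht'nD : ∀ z ∈ t', z ∉ D := fun z hz =>
        (Finset.mem_sdiff.mp (hs₂sub (ht's₂ hz))).2
      have hut' : u ∉ t' := fun h => ht'nD u h huD
      have hvt' : v ∉ t' := fun h => ht'nD v h hvD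
      have hne_uv : u ≠ v := huv.ne
      refine ⟨insert u (insert v t'), ?_, ?_, ?_⟩
      · intro z hz
        rcases Finset.mem_insert.mp hz with rfl | hz
        · exact hu
        rcases Finset.mem_insert.mp hz with rfl | hz
        · exact hv
        · exact hs₂s (ht's₂ hz)
      · -- degrees
        intro y hy
        have hfilter_ne : ∀ z ∈ t', ¬G.Adj z u ∧ ¬G.Adj z v := by
          intro z hz
          have hzs : z ∈ s := hs₂s (ht's₂ hz)
          constructor
          · intro h; exact ht'nD z hz (hD1 z hzs h.symm)
          · intro h; exact ht'nD z hz (hD2 z hzs h.symm)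
        rcases Finset.mem_insert.mp hy with rfl | hy'
        · -- y = u
          show ((insert y (insert v t')).filter (fun w => G.Adj y w)).card = 1
          have : (insert y (insert v t')).filter (fun w => G.Adj y w) = {v} := by
            ext z
            simp only [Finset.mem_filter, Finset.mem_insert, Finset.mem_singleton]
            constructor
            · rintro ⟨rfl | rfl | hz, hadj⟩
              · exact absurd hadj (G.irrefl)
              · rfl
              · exact absurd hadj (fun h => (hfilter_ne z hz).1 h.symm)
            · rintro rfl
              exact ⟨Or.inr (Or.inl rfl), huv⟩
          rw [this, Finset.card_singleton]
        rcases Finset.mem_insert.mp hy' with rfl | hy''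
        · -- y = v
          show ((insert u (insert y t')).filter (fun w => G.Adj y w)).card = 1
          have : (insert u (insert y t')).filter (fun w => G.Adj y w) = {u} := by
            ext z
            simp only [Finset.mem_filter, Finset.mem_insert, Finset.mem_singleton]
            constructor
            · rintro ⟨rfl | rfl | hz, hadj⟩
              · rfl
              · exact absurd hadj (G.irrefl)
              · exact absurd hadj (fun h => (hfilter_ne z hz).2 h.symm)
            · rintro rfl
              exact ⟨Or.inl rfl, huv.symm⟩
          rw [this, Finset.card_singleton]
        · -- y ∈ t'
          have hys : y ∈ s := hs₂s (ht's₂ hy'')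
          have hynD : y ∉ D := ht'nD y hy''
          have : (insert u (insert v t')).filter (fun w => G.Adj y w)
              = t'.filter (fun w => G.Adj y w) := by
            ext z
            simp only [Finset.mem_filter, Finset.mem_insert]
            constructor
            · rintro ⟨rfl | rfl | hz, hadj⟩
              · exact absurd (hD1 y hys hadj.symm) hynD
              · exact absurd (hD2 y hys hadj.symm) hynD
              · exact ⟨hz, hadj⟩
            · rintro ⟨hz, hadj⟩
              exact ⟨Or.inr (Or.inr hz), hadj⟩
          show ((insert u (insert v t')).filter (fun w => G.Adj y w)).card = 1
          rw [this]
          exact ht'deg y hy''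
      · -- cardinality
        have h5 : u ∉ insert v t' := by
          simp only [Finset.mem_insert]
          push_neg
          exact ⟨hne_uv, hut'⟩
        have hc1 : (insert u (insert v t')).card = t'.card + 2 := by
          rw [Finset.card_insert_of_notMem h5, Finset.card_insert_of_notMem hvt']
        have hc2 : (s \ D).card = s.card - D.card := Finset.card_sdiff_of_subset hDs
        have hIsub : I ⊆ s \ D := Finset.filter_subset _ _
        have hc3 : s₂.card = (s \ D).card - I.card := Finset.card_sdiff_of_subset hIsub
        have hc4 := Finset.card_le_card hDs
        have hc5 := Finset.card_le_card hIsub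
        omega
    -- now construct u, v, D
    by_cases hA : ∃ u ∈ s, (s.filter (fun w => G.Adj u w)).card = 1
    · obtain ⟨u, hu, hNu⟩ := hA
      obtain ⟨v, hveq⟩ := Finset.card_eq_one.mp hNu
      have hvmem : v ∈ s.filter (fun w => G.Adj u w) := by rw [hveq]; exact Finset.mem_singleton_self v
      have hv : v ∈ s := (Finset.mem_filter.mp hvmem).1
      have huv : G.Adj u v := (Finset.mem_filter.mp hvmem).2
      set Nv : Finset V := s.filter (fun w => G.Adj v w) with hNv
      set D : Finset V := insert v Nv with hD
      have hNvs : Nv ⊆ s := Finset.filter_subset _ _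
      have hDs : D ⊆ s := Finset.insert_subset hv hNvs
      have huNv : u ∈ Nv := Finset.mem_filter.mpr ⟨hu, huv.symm⟩
      have huD : u ∈ D := Finset.mem_insert_of_mem huNv
      have hvD : v ∈ D := Finset.mem_insert_self _ _
      have hD1 : ∀ x ∈ s, G.Adj u x → x ∈ D := by
        intro x hx hadj
        have : x ∈ s.filter (fun w => G.Adj u w) := Finset.mem_filter.mpr ⟨hx, hadj⟩
        rw [hveq] at this
        rw [Finset.mem_singleton] at this
        exact this ▸ hvD
      have hD2 : ∀ x ∈ s, G.Adj v x → x ∈ D := fun x hx hadj =>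
        Finset.mem_insert_of_mem (Finset.mem_filter.mpr ⟨hx, hadj⟩)
      apply key u v D hu hv huv hDs huD hvD hD1 hD2
      -- bound: D.card ≤ 3 and I.card ≤ 1
      have hDcard : D.card ≤ 3 := by
        have h1 := Finset.card_insert_le v Nv
        have h2 := hdeg2 v hv
        rw [← hNv] at h2
        rw [← hD] at h1
        omega
      set I : Finset V := (s \ D).filter (fun y => ∀ z ∈ s \ D, ¬G.Adj y z) with hI
      have hIcard : I.card ≤ 1 := by
        by_contra hcon
        push_neg at hcon
        obtain ⟨y₁, hy₁, y₂, hy₂, hy12⟩ := Finset.one_lt_card.mp hcon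
        set E : Finset V := Nv.erase u with hE
        have hEcard : E.card ≤ 1 := by
          have h1 := Finset.card_erase_of_mem huNv
          have h2 := hdeg2 v hv
          rw [← hNv] at h2
          rw [← hE] at h1
          omega
        have hadjE : ∀ y ∈ I, ∃ z ∈ E, G.Adj y z := by
          intro y hy
          have hymem := Finset.mem_filter.mp hy
          have hysd := Finset.mem_sdiff.mp hymem.1
          obtain ⟨z, hz, hyz⟩ := hmin y hysd.1
          have hzD : z ∈ D := by
            by_contra hzD
            exact hymem.2 z (Finset.mem_sdiff.mpr ⟨hz, hzD⟩) hyz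
          have hzu : z ≠ u := by
            rintro rfl
            exact hysd.2 (hD1 y hysd.1 hyz.symm)
          have hzv : z ≠ v := by
            rintro rfl
            exact hysd.2 (hD2 y hysd.1 hyz.symm)
          have hzNv : z ∈ Nv := by
            rcases Finset.mem_insert.mp hzD with h | h
            · exact absurd h hzv
            · exact h
          exact ⟨z, Finset.mem_erase.mpr ⟨hzu, hzNv⟩, hyz⟩
        obtain ⟨z₁, hz₁, hadj₁⟩ := hadjE y₁ hy₁
        obtain ⟨z₂, hz₂, hadj₂⟩ := hadjE y₂ hy₂
        have hzz : z₁ = z₂ := Finset.card_le_one.mp hEcard z₁ hz₁ z₂ hz₂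
        subst hzz
        -- z₁ has three neighbors: v, y₁, y₂
        have hz₁Nv : z₁ ∈ Nv := Finset.mem_of_mem_erase hz₁
        have hz₁s : z₁ ∈ s := hNvs hz₁Nv
        have hz₁v : G.Adj z₁ v := ((Finset.mem_filter.mp hz₁Nv).2).symm
        have hy₁s : y₁ ∈ s := (Finset.mem_sdiff.mp (Finset.mem_filter.mp hy₁).1).1
        have hy₂s : y₂ ∈ s := (Finset.mem_sdiff.mp (Finset.mem_filter.mp hy₂).1).1
        have hy₁D : y₁ ∉ D := (Finset.mem_sdiff.mp (Finset.mem_filter.mp hy₁).1).2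
        have hy₂D : y₂ ∉ D := (Finset.mem_sdiff.mp (Finset.mem_filter.mp hy₂).1).2
        have h3 : 2 < (s.filter (fun w => G.Adj z₁ w)).card := by
          apply Finset.two_lt_card.mpr
          refine ⟨v, Finset.mem_filter.mpr ⟨hv, hz₁v⟩,
                 y₁, Finset.mem_filter.mpr ⟨hy₁s, hadj₁.symm⟩,
                 y₂, Finset.mem_filter.mpr ⟨hy₂s, hadj₂.symm⟩, ?_, ?_, hy12⟩
          · rintro rfl; exact hy₁D hvD
          · rintro rfl; exact hy₂D hvD
        have := hdeg2 z₁ hz₁s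
        omega
      omega
    · -- case B: all degrees exactly 2
      push_neg at hA
      have hdeg : ∀ u ∈ s, (s.filter (fun w => G.Adj u w)).card = 2 := by
        intro u hu
        have h1 := hdeg1 u hu
        have h2 := hdeg2 u hu
        have h3 := hA u hu
        omega
      obtain ⟨u, hu⟩ := hne
      obtain ⟨v, w, hvw, hNueq⟩ := Finset.card_eq_two.mp (hdeg u hu)
      have hvmem : v ∈ s.filter (fun z => G.Adj u z) := by rw [hNueq]; simp
      have hwmem : w ∈ s.filter (fun z => G.Adj u z) := by rw [hNueq]; simp
      have hv : v ∈ s := (Finset.mem_filter.mp hvmem).1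
      have hw : w ∈ s := (Finset.mem_filter.mp hwmem).1
      have huv : G.Adj u v := (Finset.mem_filter.mp hvmem).2
      have huw : G.Adj u w := (Finset.mem_filter.mp hwmem).2
      -- v's other neighbor x
      have hNveq : ∃ x, x ≠ u ∧ s.filter (fun z => G.Adj v z) = {u, x} := by
        obtain ⟨p, q, hpq, he⟩ := Finset.card_eq_two.mp (hdeg v hv)
        have hum : u ∈ s.filter (fun z => G.Adj v z) := Finset.mem_filter.mpr ⟨hu, huv.symm⟩
        rw [he] at hum
        rcases Finset.mem_insert.mp hum with rfl | h
        · exact ⟨q, fun h => hpq h.symm, he⟩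
        · rw [Finset.mem_singleton] at h
          subst h
          exact ⟨p, fun h => hpq h, by rw [he, Finset.pair_comm]⟩
      obtain ⟨x, hxu, hNveq⟩ := hNveq
      have hxmem : x ∈ s.filter (fun z => G.Adj v z) := by rw [hNveq]; simp
      have hx : x ∈ s := (Finset.mem_filter.mp hxmem).1
      have hvx : G.Adj v x := (Finset.mem_filter.mp hxmem).2
      set D : Finset V := insert u (insert v (insert w {x})) with hD
      have hDs : D ⊆ s := by
        intro z hz
        simp only [hD, Finset.mem_insert, Finset.mem_singleton] at hz
        rcases hz with rfl | rfl | rfl | rfl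
        exacts [hu, hv, hw, hx]
      have huD : u ∈ D := by simp [hD]
      have hvD : v ∈ D := by simp [hD]
      have hwD : w ∈ D := by simp [hD]
      have hxD : x ∈ D := by simp [hD]
      have hD1 : ∀ z ∈ s, G.Adj u z → z ∈ D := by
        intro z hz hadj
        have : z ∈ s.filter (fun y => G.Adj u y) := Finset.mem_filter.mpr ⟨hz, hadj⟩
        rw [hNueq] at this
        rcases Finset.mem_insert.mp this with rfl | h
        · exact hvD
        · rw [Finset.mem_singleton] at h; exact h ▸ hwD
      have hD2 : ∀ z ∈ s, G.Adj v z → z ∈ D := by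
        intro z hz hadj
        have : z ∈ s.filter (fun y => G.Adj v y) := Finset.mem_filter.mpr ⟨hz, hadj⟩
        rw [hNveq] at this
        rcases Finset.mem_insert.mp this with rfl | h
        · exact huD
        · rw [Finset.mem_singleton] at h; exact h ▸ hxD
      apply key u v D hu hv huv hDs huD hvD hD1 hD2
      have hDcard : D.card ≤ 4 := by
        rw [hD]
        apply le_trans (Finset.card_insert_le _ _)
        have h2 := Finset.card_insert_le v (insert w ({x} : Finset V))
        have h3 := Finset.card_insert_le w ({x} : Finset V)
        simp only [Finset.card_singleton] at h3
        omega
      have hIempty : ((s \ D).filter (fun y => ∀ z ∈ s \ D, ¬G.Adj y z)) = ∅ := by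
        rw [Finset.eq_empty_iff_forall_notMem]
        intro y hy
        have hymem := Finset.mem_filter.mp hy
        have hysd := Finset.mem_sdiff.mp hymem.1
        have hys : y ∈ s := hysd.1
        have hyD : y ∉ D := hysd.2
        -- y's neighbor set ⊆ {w, x}
        have hsub : s.filter (fun z => G.Adj y z) ⊆ {w, x} := by
          intro z hz
          have hz' := Finset.mem_filter.mp hz
          have hzD : z ∈ D := by
            by_contra hzD
            exact hymem.2 z (Finset.mem_sdiff.mpr ⟨hz'.1, hzD⟩) hz'.2
          have hzu : z ≠ u := by
            rintro rfl
            exact hyD (hD1 y hys hz'.2.symm)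
          have hzv : z ≠ v := by
            rintro rfl
            exact hyD (hD2 y hys hz'.2.symm)
          simp only [hD, Finset.mem_insert, Finset.mem_singleton] at hzD
          rcases hzD with rfl | rfl | rfl | rfl
          · exact absurd rfl hzu
          · exact absurd rfl hzv
          · exact Finset.mem_insert_self _ _
          · simp
        have hcard2 : (s.filter (fun z => G.Adj y z)).card = 2 := hdeg y hys
        have hwx2 : ({w, x} : Finset V).card ≤ 2 := Finset.card_insert_le _ _ |>.trans (by simp)
        have heq : s.filter (fun z => G.Adj y z) = {w, x} := by
          apply Finset.eq_of_subset_of_card_le hsub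
          omega
        have hwmem' : w ∈ s.filter (fun z => G.Adj y z) := by rw [heq]; simp
        have hxmem' : x ∈ s.filter (fun z => G.Adj y z) := by rw [heq]; simp
        have hyw : G.Adj y w := (Finset.mem_filter.mp hwmem').2
        have hyx : G.Adj y x := (Finset.mem_filter.mp hxmem').2
        -- color contradiction
        have h1 : c v ≠ c u := hc v u hv hu huv.symm
        have h2 : c w ≠ c u := hc w u hw hu huw.symm
        have h3 : c x ≠ c v := hc x v hx hv hvx.symm
        have h4 : c y ≠ c w := hc y w hys hw hyw
        have h5 : c y ≠ c x := hc y x hys hx hyx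
        omega
      rw [hIempty]
      simp
      omega

/-- Assuming Scott's weighted lemma, every claw-free graph `G` without isolated vertices
satisfies `f_o(G) ≥ |V(G)|/χ(G)`. -/
theorem stmt_14
    (scott : ∀ (W : Type) [Fintype W] (G : SimpleGraph W),
      (∀ v, ∃ w, G.Adj v w) →
      ∀ k m : ℕ, G.chromaticNumber = k → 2 ≤ m → m ≤ k →
        ∃ s : Finset W, (G.induce (↑s : Set W)).chromaticNumber = m ∧
          (∀ v ∈ s, ∃ w ∈ s, G.Adj v w) ∧
          m * Fintype.card W ≤ k * s.card)
    {V : Type} [Fintype V] (G : SimpleGraph V)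
    (hclaw : IsEmpty (completeBipartiteGraph (Fin 1) (Fin 3) ↪g G))
    (hiso : ∀ v, ∃ w, G.Adj v w)
    (k : ℕ) (hk : G.chromaticNumber = k) :
    Fintype.card V ≤ k * fo G := by
  have hcf := clawfree' G hclaw
  rcases isEmpty_or_nonempty V with hV | hV
  · simp [Fintype.card_eq_zero]
  have hcolk : G.Colorable k := SimpleGraph.chromaticNumber_le_iff_colorable.mp (le_of_eq hk)
  have h2k : 2 ≤ k := by
    by_contra hcon
    push_neg at hcon
    have hcol1 : G.Colorable 1 := hcolk.mono (by omega)
    obtain ⟨w0, hadj⟩ := hiso (Classical.arbitrary V)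
    exact (hcol1.some.valid hadj) (Subsingleton.elim _ _)
  obtain ⟨s, hχ2, hsmin, hsize⟩ := scott V G hiso k 2 hk le_rfl h2k
  have hcol2 : (G.induce (↑s : Set V)).Colorable 2 :=
    SimpleGraph.chromaticNumber_le_iff_colorable.mp (le_of_eq hχ2)
  set C := hcol2.some with hC
  set c : V → Fin 2 := fun v => if h : v ∈ (↑s : Set V) then C ⟨v, h⟩ else 0 with hc
  have hcproper : ∀ u v, u ∈ s → v ∈ s → G.Adj u v → c u ≠ c v := by
    intro u v hu hv hadj
    have hu' : u ∈ (↑s : Set V) := hu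
    have hv' : v ∈ (↑s : Set V) := hv
    have : (G.induce (↑s : Set V)).Adj ⟨u, hu'⟩ ⟨v, hv'⟩ := hadj
    have hval := C.valid this
    simp only [hc, dif_pos hu', dif_pos hv']
    exact hval
  obtain ⟨t, hts, htdeg, htcard⟩ := mainlem G c hcf s.card s le_rfl hcproper hsmin
  have hodd : IsOddSet G t := by
    intro v hv
    rw [htdeg v hv]
    exact odd_one
  have hfo : t.card ≤ fo G := by
    apply le_csSup
    · refine ⟨Fintype.card V, ?_⟩
      rintro n ⟨s', _, rfl⟩
      exact Finset.card_le_univ s'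
    · exact ⟨t, hodd, rfl⟩
  have h1 : 2 * Fintype.card V ≤ k * (2 * t.card) :=
    le_trans hsize (Nat.mul_le_mul_left k htcard)
  have h2 : k * (2 * t.card) = 2 * (k * t.card) := by ring
  have h3 : Fintype.card V ≤ k * t.card := by omega
  have h4 : k * t.card ≤ k * fo G := Nat.mul_le_mul_left k hfo
  omega
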